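/- arXiv:1608.08859 — 3 statements merged into one kernel-verified Lean document; each statement's English description precedes it below -/
import Mathlib

section
/- There exists a finite strategic game (with finitely many players, each having a finite strategy set including a 'refuse' option with payoff 0) possessing a Nash equilibrium s and an individual improvement path starting from a profile obtained by a single deviation from s that is infinite, i.e., there exists an infinite sequence of profiles each an individual improvement of the previous one. -/
/-- A profile of a finite strategic game with `N` players whose strategies are
    drawn from `Fin M`, with availability sets `A`. -/
abbrev Profile (N M : ℕ) := Fin N → Fin M

/-- `σ` is a Nash equilibrium: every player uses an available strategy and no
    unilateral deviation to an available strategy strictly increases the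
    deviator's payoff. -/
def IsNash {N M : ℕ} (pay : Profile N M → Fin N → ℝ) (A : Fin N → Finset (Fin M))
    (σ : Profile N M) : Prop :=
  (∀ i, σ i ∈ A i) ∧
  ∀ i, ∀ t ∈ A i, pay (Function.update σ i t) i ≤ pay σ i

/-- `σ'` is obtained from `σ` by an individual improvement: one player switches
    to an available strategy, either because their current strategy is no longer
    available or because the switch strictly increases their payoff. -/
def Imp {N M : ℕ} (pay : Profile N M → Fin N → ℝ) (A : Fin N → Finset (Fin M))
    (σ σ' : Profile N M) : Prop :=
  ∃ i, ∃ t ∈ A i, σ' = Function.update σ i t ∧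
    (σ i ∉ A i ∨ (t ≠ σ i ∧ pay σ' i > pay σ i))

def myPay (σ : Profile 2 3) (i : Fin 2) : ℝ :=
  if σ i = 0 then 0 else if σ (i + 1) = 0 then -1
  else if i = 0 then (if σ 0 = σ 1 then 1 else -1)
  else (if σ 0 = σ 1 then -1 else 1)

def myF : ℕ → Profile 2 3
  | 0 => ![1, 0]
  | k + 1 =>
    match k % 4 with
    | 0 => ![1, 2]
    | 1 => ![2, 2]
    | 2 => ![2, 1]
    | _ => ![1, 1]

/-- There exists a finite strategic game (every player has a `refuse` strategy
    with payoff 0) with a Nash equilibrium `s` and an infinite individual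
    improvement path starting from a single deviation from `s`. -/
theorem fragile_game_exists :
    ∃ (N M : ℕ) (pay : Profile N M → Fin N → ℝ) (A : Fin N → Finset (Fin M))
      (refuse : Fin N → Fin M),
      (∀ i, refuse i ∈ A i) ∧
      (∀ (σ : Profile N M) (i : Fin N), pay (Function.update σ i (refuse i)) i = 0) ∧
      ∃ s : Profile N M, IsNash pay A s ∧
        ∃ (j : Fin N) (t : Fin M), t ∈ A j ∧
          ∃ f : ℕ → Profile N M,
            f 0 = Function.update s j t ∧
            ∀ k, Imp pay A (f k) (f (k + 1)) := by
  refine ⟨2, 3, myPay, fun _ => Finset.univ, fun _ => 0, fun i => Finset.mem_univ _, ?_,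
    ![0, 0], ⟨fun i => Finset.mem_univ _, ?_⟩, 0, 1, Finset.mem_univ _, myF, ?_, ?_⟩
  · intro σ i
    simp [myPay, Function.update_self]
  · intro i t _
    fin_cases i <;> fin_cases t <;>
      simp [myPay, Function.update, Fin.ext_iff, (show ((2:Fin 2)) = 0 by decide)]
  · have h : Function.update ![(0 : Fin 3), 0] 0 1 = ![1, 0] := by decide
    simp [myF, h]
  · intro k
    have himp : ∀ a b : Profile 2 3, ∀ i : Fin 2, ∀ t : Fin 3,
        b = Function.update a i t → t ≠ a i → myPay b i > myPay a i →
        Imp myPay (fun _ => (Finset.univ : Finset (Fin 3))) a b := by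
      intro a b i t h1 h2 h3
      exact ⟨i, t, Finset.mem_univ _, h1, Or.inr ⟨h2, h3⟩⟩
    have i01 : Imp myPay (fun _ => (Finset.univ : Finset (Fin 3))) ![1, 0] ![1, 2] := by
      refine himp _ _ 1 2 (by decide) (by decide) ?_
      simp [myPay, Fin.ext_iff, (show ((2:Fin 2)) = 0 by decide)]
    have i12 : Imp myPay (fun _ => (Finset.univ : Finset (Fin 3))) ![1, 2] ![2, 2] := by
      refine himp _ _ 0 2 (by decide) (by decide) ?_
      simp [myPay, Fin.ext_iff, (show ((2:Fin 2)) = 0 by decide)]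
    have i23 : Imp myPay (fun _ => (Finset.univ : Finset (Fin 3))) ![2, 2] ![2, 1] := by
      refine himp _ _ 1 1 (by decide) (by decide) ?_
      simp [myPay, Fin.ext_iff, (show ((2:Fin 2)) = 0 by decide)]
    have i34 : Imp myPay (fun _ => (Finset.univ : Finset (Fin 3))) ![2, 1] ![1, 1] := by
      refine himp _ _ 0 1 (by decide) (by decide) ?_
      simp [myPay, Fin.ext_iff, (show ((2:Fin 2)) = 0 by decide)]
    have i41 : Imp myPay (fun _ => (Finset.univ : Finset (Fin 3))) ![1, 1] ![1, 2] := by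
      refine himp _ _ 1 2 (by decide) (by decide) ?_
      simp [myPay, Fin.ext_iff, (show ((2:Fin 2)) = 0 by decide)]
    match k with
    | 0 => simpa [myF] using i01
    | k + 1 =>
      have h4 : k % 4 = 0 ∨ k % 4 = 1 ∨ k % 4 = 2 ∨ k % 4 = 3 := by omega
      rcases h4 with h | h | h | h
      · have h' : (k + 1) % 4 = 1 := by omega
        simpa [myF, h, h'] using i12
      · have h' : (k + 1) % 4 = 2 := by omega
        simpa [myF, h, h'] using i23
      · have h' : (k + 1) % 4 = 3 := by omega
        simpa [myF, h, h'] using i34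
      · have h' : (k + 1) % 4 = 0 := by omega
        simpa [myF, h, h'] using i41
end

section
/- There exists a finite strategic game G, a Nash equilibrium s of G, and an 'expansion' G' (identical to G except one player's strategy set gains one new strategy) such that: s is not a Nash equilibrium of G', every individual improvement path in G' starting from s is finite and terminates in a profile s' that is a Nash equilibrium of both G and G', and every player's payoff at s' is strictly less than at s. -/
namespace VG

def s0 : Profile 2 3 := ![0,0]
def a0 : Profile 2 3 := ![1,0]
def b0 : Profile 2 3 := ![1,2]
def c0 : Profile 2 3 := ![2,2]

def payN : Profile 2 3 → Fin 2 → ℕ := fun σ i =>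
  if σ = s0 then 3
  else if σ = a0 then (if i = 0 then 4 else 1)
  else if σ = b0 then (if i = 0 then 1 else 2)
  else if σ = c0 then 2 else 0

noncomputable def pay : Profile 2 3 → Fin 2 → ℝ := fun σ i => (payN σ i : ℝ)

def A : Fin 2 → Finset (Fin 3) := fun _ => {0, 2}

def AE : Fin 2 → Finset (Fin 3) := Function.update A 0 (insert 1 (A 0))

def IsNashN (B : Fin 2 → Finset (Fin 3)) (σ : Profile 2 3) : Prop :=
  (∀ i, σ i ∈ B i) ∧ ∀ i, ∀ t ∈ B i, payN (Function.update σ i t) i ≤ payN σ i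

def ImpN (B : Fin 2 → Finset (Fin 3)) (σ σ' : Profile 2 3) : Prop :=
  ∃ i, ∃ t ∈ B i, σ' = Function.update σ i t ∧
    (σ i ∉ B i ∨ (t ≠ σ i ∧ payN σ' i > payN σ i))

lemma isNash_iff (B : Fin 2 → Finset (Fin 3)) (σ : Profile 2 3) :
    IsNash pay B σ ↔ IsNashN B σ := by
  unfold IsNash IsNashN pay
  simp [Nat.cast_le]

lemma imp_iff (B : Fin 2 → Finset (Fin 3)) (σ σ' : Profile 2 3) :
    Imp pay B σ σ' ↔ ImpN B σ σ' := by
  unfold Imp ImpN pay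
  simp [Nat.cast_lt]

lemma step_sN : ∀ σ', ImpN AE s0 σ' → σ' = a0 := by unfold ImpN; decide
lemma step_aN : ∀ σ', ImpN AE a0 σ' → σ' = b0 := by unfold ImpN; decide
lemma step_bN : ∀ σ', ImpN AE b0 σ' → σ' = c0 := by unfold ImpN; decide
lemma term_cN : ∀ σ', ¬ ImpN AE c0 σ' := by unfold ImpN; decide

lemma step_s : ∀ σ', Imp pay AE s0 σ' → σ' = a0 :=
  fun σ' h => step_sN σ' ((imp_iff _ _ _).mp h)
lemma step_a : ∀ σ', Imp pay AE a0 σ' → σ' = b0 :=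
  fun σ' h => step_aN σ' ((imp_iff _ _ _).mp h)
lemma step_b : ∀ σ', Imp pay AE b0 σ' → σ' = c0 :=
  fun σ' h => step_bN σ' ((imp_iff _ _ _).mp h)
lemma term_c : ∀ σ', ¬ Imp pay AE c0 σ' :=
  fun σ' h => term_cN σ' ((imp_iff _ _ _).mp h)

lemma imp_s : Imp pay AE s0 a0 := (imp_iff _ _ _).mpr (by unfold ImpN; decide)
lemma imp_a : Imp pay AE a0 b0 := (imp_iff _ _ _).mpr (by unfold ImpN; decide)
lemma imp_b : Imp pay AE b0 c0 := (imp_iff _ _ _).mpr (by unfold ImpN; decide)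

lemma nash_A_s0 : IsNash pay A s0 := (isNash_iff _ _).mpr (by unfold IsNashN; decide)
lemma not_nash_AE_s0 : ¬ IsNash pay AE s0 := fun h => (by unfold IsNashN; decide : ¬ IsNashN AE s0) ((isNash_iff _ _).mp h)
lemma nash_A_c0 : IsNash pay A c0 := (isNash_iff _ _).mpr (by unfold IsNashN; decide)
lemma nash_AE_c0 : IsNash pay AE c0 := (isNash_iff _ _).mpr (by unfold IsNashN; decide)
lemma pay_lt : ∀ i, pay c0 i < pay s0 i := by
  intro i
  have h : ∀ i, payN c0 i < payN s0 i := by decide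
  unfold pay
  exact_mod_cast h i

end VG

/-- There exists a finite strategic game `G`, a Nash equilibrium `s` of `G`, and
    an expansion `G'` (one player `j` gains one new strategy `x`) such that `s`
    is no longer a Nash equilibrium of `G'`, there is no infinite individual
    improvement path in `G'` from `s`, and every maximal improvement path in
    `G'` from `s` terminates in a profile that is a Nash equilibrium of both
    games with strictly smaller payoff for every player: a vulnerable game. -/
theorem vulnerable_game_exists :
    ∃ (N M : ℕ) (pay : Profile N M → Fin N → ℝ) (A : Fin N → Finset (Fin M))
      (j : Fin N) (x : Fin M), x ∉ A j ∧
      ∃ s : Profile N M,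
        IsNash pay A s ∧
        (let A' := Function.update A j (insert x (A j))
        ¬ IsNash pay A' s ∧
        (¬ ∃ f : ℕ → Profile N M, f 0 = s ∧ ∀ k, Imp pay A' (f k) (f (k + 1))) ∧
        ∀ (m : ℕ) (f : Fin (m + 1) → Profile N M),
          f 0 = s →
          (∀ k : Fin m, Imp pay A' (f k.castSucc) (f k.succ)) →
          (∀ σ', ¬ Imp pay A' (f (Fin.last m)) σ') →
          IsNash pay A (f (Fin.last m)) ∧ IsNash pay A' (f (Fin.last m)) ∧
            ∀ i, pay (f (Fin.last m)) i < pay s i) := by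
  refine ⟨2, 3, VG.pay, VG.A, 0, 1, by decide, VG.s0, VG.nash_A_s0, ?_, ?_, ?_⟩
  · exact VG.not_nash_AE_s0
  · rintro ⟨f, h0, hstep⟩
    have h1 : f 1 = VG.a0 := VG.step_s _ (by have := hstep 0; rwa [h0] at this)
    have h2 : f 2 = VG.b0 := VG.step_a _ (by have := hstep 1; rwa [h1] at this)
    have h3 : f 3 = VG.c0 := VG.step_b _ (by have := hstep 2; rwa [h2] at this)
    exact VG.term_c _ (by have := hstep 3; rwa [h3] at this)
  · intro m f h0 hstep hmax
    have inv : ∀ n (h : n < m + 1),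
        f ⟨n, h⟩ = VG.s0 ∨ f ⟨n, h⟩ = VG.a0 ∨ f ⟨n, h⟩ = VG.b0 ∨ f ⟨n, h⟩ = VG.c0 := by
      intro n
      induction n with
      | zero =>
        intro h
        left
        have : (⟨0, h⟩ : Fin (m + 1)) = 0 := rfl
        rw [this, h0]
      | succ n ih =>
        intro h
        have hnm : n < m := Nat.succ_lt_succ_iff.mp h
        have hstepn := hstep ⟨n, hnm⟩
        have hn : n < m + 1 := Nat.lt_of_lt_of_le hnm (Nat.le_succ m)
        have hprev := ih hn
        have hcast : (⟨n, hnm⟩ : Fin m).castSucc = (⟨n, hn⟩ : Fin (m + 1)) := rfl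
        have hsucc : (⟨n, hnm⟩ : Fin m).succ = (⟨n + 1, h⟩ : Fin (m + 1)) := rfl
        rw [hcast, hsucc] at hstepn
        rcases hprev with hp | hp | hp | hp
        · rw [hp] at hstepn; right; left; exact VG.step_s _ hstepn
        · rw [hp] at hstepn; right; right; left; exact VG.step_a _ hstepn
        · rw [hp] at hstepn; right; right; right; exact VG.step_b _ hstepn
        · rw [hp] at hstepn; exact absurd hstepn (VG.term_c _)
    have hlast : f (Fin.last m) = VG.s0 ∨ f (Fin.last m) = VG.a0 ∨
        f (Fin.last m) = VG.b0 ∨ f (Fin.last m) = VG.c0 := inv m (Nat.lt_succ_self m)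
    rcases hlast with hp | hp | hp | hp
    · exact absurd (by rw [hp]; exact VG.imp_s) (hmax VG.a0)
    · exact absurd (by rw [hp]; exact VG.imp_a) (hmax VG.b0)
    · exact absurd (by rw [hp]; exact VG.imp_b) (hmax VG.c0)
    · rw [hp]
      exact ⟨VG.nash_A_c0, VG.nash_AE_c0, VG.pay_lt⟩
end

section
/- There exists a finite strategic game G, a Nash equilibrium s of G, and a 'contraction' G' (identical to G except one player loses one strategy, not the one played at s or losing forces a move) such that every individual improvement path in G' starting from the induced profile terminates in a profile s' that is a Nash equilibrium of both G and G' with every player's payoff strictly greater at s' than at s. -/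
namespace Ineff

def pay (σ : Profile 2 2) (i : Fin 2) : ℝ :=
  if σ 0 = 0 then (if σ 1 = 0 then 0 else (if i = 0 then 0 else -1))
  else (if σ 1 = 0 then (if i = 0 then -1 else 0) else 1)

def A : Fin 2 → Finset (Fin 2) := fun _ => Finset.univ

def A' : Fin 2 → Finset (Fin 2) := Function.update A 0 (Finset.univ.erase 0)

lemma fin2 (t : Fin 2) : t = 0 ∨ t = 1 := by omega

lemma upd0 (a b t : Fin 2) : Function.update ![a,b] 0 t = ![t,b] := by
  funext i; fin_cases i <;> simp [Function.update]

lemma upd1 (a b t : Fin 2) : Function.update ![a,b] 1 t = ![a,t] := by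
  funext i; fin_cases i <;> simp [Function.update]

lemma profile_eq (σ : Profile 2 2) : σ = ![σ 0, σ 1] := by
  funext i; fin_cases i <;> simp

lemma pay00 (i : Fin 2) : pay ![0,0] i = 0 := by simp [pay]
lemma pay11 (i : Fin 2) : pay ![1,1] i = 1 := by norm_num [pay]
lemma pay10_0 : pay ![1,0] 0 = -1 := by norm_num [pay]
lemma pay10_1 : pay ![1,0] 1 = 0 := by norm_num [pay]
lemma pay01_0 : pay ![0,1] 0 = 0 := by norm_num [pay]
lemma pay01_1 : pay ![0,1] 1 = -1 := by norm_num [pay]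

lemma memA (i t : Fin 2) : t ∈ A i := by simp [A]
lemma memA'0 (t : Fin 2) : t ∈ A' 0 ↔ t = 1 := by
  simp [A', A, Function.update]; omega
lemma memA'1 (t : Fin 2) : t ∈ A' 1 := by
  simp [A', A, Function.update]

lemma nashS : IsNash pay A ![0,0] := by
  refine ⟨fun i => memA _ _, fun i t _ => ?_⟩
  rcases fin2 i with rfl | rfl <;> rcases fin2 t with rfl | rfl <;>
    simp only [upd0, upd1, pay00, pay10_0, pay01_1] <;> norm_num

lemma nashT : IsNash pay A ![1,1] := by
  refine ⟨fun i => memA _ _, fun i t _ => ?_⟩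
  rcases fin2 i with rfl | rfl <;> rcases fin2 t with rfl | rfl <;>
    simp only [upd0, upd1, pay11, pay10_1, pay01_0] <;> norm_num

lemma nashT' : IsNash pay A' ![1,1] := by
  refine ⟨fun i => ?_, fun i t ht => ?_⟩
  · rcases fin2 i with rfl | rfl
    · rw [show (![1,1] : Profile 2 2) 0 = 1 from rfl, memA'0]
    · exact memA'1 _
  · exact nashT.2 i t (memA _ _)

-- characterization of Imp from the three relevant states
lemma imp_from00 (σ' : Profile 2 2) (h : Imp pay A' ![0,0] σ') : σ' = ![1,0] := by
  obtain ⟨i, t, ht, rfl, hcond⟩ := h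
  rcases fin2 i with rfl | rfl
  · rw [memA'0] at ht; subst ht; rw [upd0]
  · rcases hcond with h | ⟨hne, hgt⟩
    · exact absurd (memA'1 _) h
    · rcases fin2 t with rfl | rfl
      · simp at hne
      · rw [upd1, pay01_1, pay00] at hgt; norm_num at hgt

lemma imp_from10 (σ' : Profile 2 2) (h : Imp pay A' ![1,0] σ') : σ' = ![1,1] := by
  obtain ⟨i, t, ht, rfl, hcond⟩ := h
  rcases fin2 i with rfl | rfl
  · rw [memA'0] at ht; subst ht
    rcases hcond with h | ⟨hne, hgt⟩
    · rw [show (![1,0] : Profile 2 2) 0 = 1 from rfl, memA'0] at h; simp at h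
    · simp [show (![1,0] : Profile 2 2) 0 = 1 from rfl] at hne
  · rcases hcond with h | ⟨hne, hgt⟩
    · exact absurd (memA'1 _) h
    · rcases fin2 t with rfl | rfl
      · simp at hne
      · rw [upd1]

lemma no_imp_from11 (σ' : Profile 2 2) (h : Imp pay A' ![1,1] σ') : False := by
  obtain ⟨i, t, ht, rfl, hcond⟩ := h
  rcases fin2 i with rfl | rfl
  · rw [memA'0] at ht; subst ht
    rcases hcond with h | ⟨hne, _⟩
    · rw [show (![1,1] : Profile 2 2) 0 = 1 from rfl, memA'0] at h; simp at h
    · simp [show (![1,1] : Profile 2 2) 0 = 1 from rfl] at hne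
  · rcases hcond with h | ⟨hne, hgt⟩
    · exact absurd (memA'1 _) h
    · rcases fin2 t with rfl | rfl
      · rw [upd1, pay10_1, pay11] at hgt; norm_num at hgt
      · simp at hne

lemma imp_00_10 : Imp pay A' ![0,0] ![1,0] := by
  refine ⟨0, 1, (memA'0 1).2 rfl, (upd0 0 0 1).symm, Or.inl ?_⟩
  rw [show (![0,0] : Profile 2 2) 0 = 0 from rfl, memA'0]; simp

lemma imp_10_11 : Imp pay A' ![1,0] ![1,1] := by
  refine ⟨1, 1, memA'1 1, (upd1 1 0 1).symm, Or.inr ⟨by simp, ?_⟩⟩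
  rw [pay11, pay10_1]; norm_num

end Ineff

/-- There exists a finite strategic game `G`, a Nash equilibrium `s` of `G`, and
    a contraction `G'` (strategy `x` removed from player `j`) such that there is
    no infinite individual improvement path in `G'` from `s`, and every maximal
    improvement path in `G'` from `s` terminates in a profile that is a Nash
    equilibrium of both games with strictly greater payoff for every player:
    an ineffective game. -/
theorem ineffective_game_exists :
    ∃ (N M : ℕ) (pay : Profile N M → Fin N → ℝ) (A : Fin N → Finset (Fin M))
      (j : Fin N) (x : Fin M), x ∈ A j ∧
      ∃ s : Profile N M,
        IsNash pay A s ∧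
        (let A' := Function.update A j ((A j).erase x)
        (¬ ∃ f : ℕ → Profile N M, f 0 = s ∧ ∀ k, Imp pay A' (f k) (f (k + 1))) ∧
        ∀ (m : ℕ) (f : Fin (m + 1) → Profile N M),
          f 0 = s →
          (∀ k : Fin m, Imp pay A' (f k.castSucc) (f k.succ)) →
          (∀ σ', ¬ Imp pay A' (f (Fin.last m)) σ') →
          IsNash pay A (f (Fin.last m)) ∧ IsNash pay A' (f (Fin.last m)) ∧
            ∀ i, pay (f (Fin.last m)) i > pay s i) := by
  classical
  refine ⟨2, 2, Ineff.pay, Ineff.A, 0, 0, Ineff.memA 0 0, ![0,0], Ineff.nashS, ?_, ?_⟩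
  · -- no infinite improvement path
    have hAA' : Function.update Ineff.A 0 ((Ineff.A 0).erase 0) = Ineff.A' := rfl
    rw [hAA']
    rintro ⟨f, h0, hstep⟩
    have h1 : f 1 = ![1,0] := Ineff.imp_from00 _ (h0 ▸ hstep 0)
    have h2 : f 2 = ![1,1] := Ineff.imp_from10 _ (h1 ▸ hstep 1)
    exact Ineff.no_imp_from11 (f 3) (h2 ▸ hstep 2)
  · have hAA' : Function.update Ineff.A 0 ((Ineff.A 0).erase 0) = Ineff.A' := rfl
    rw [hAA']
    intro m f hf0 hstep hterm
    rcases m with _ | _ | _ | n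
    · -- m = 0 : endpoint is s, but s is not terminal
      have hlast : f (Fin.last 0) = ![0,0] := hf0
      exact absurd (by rw [hlast]; exact Ineff.imp_00_10) (hterm ![1,0])
    · -- m = 1 : endpoint is ![1,0], not terminal
      have h1 : f 1 = ![1,0] :=
        Ineff.imp_from00 _ (by have := hstep ⟨0, by omega⟩; rwa [show f (Fin.castSucc ⟨0, by omega⟩) = ![0,0] from hf0] at this)
      exact absurd (by rw [show f (Fin.last 1) = ![1,0] from h1]; exact Ineff.imp_10_11)
        (hterm ![1,1])
    · -- m = 2 : endpoint is ![1,1]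
      have h1 : f 1 = ![1,0] :=
        Ineff.imp_from00 _ (by have := hstep ⟨0, by omega⟩; rwa [show f (Fin.castSucc ⟨0, by omega⟩) = ![0,0] from hf0] at this)
      have h2 : f 2 = ![1,1] :=
        Ineff.imp_from10 _ (by have := hstep ⟨1, by omega⟩; rwa [show f (Fin.castSucc ⟨1, by omega⟩) = ![1,0] from h1] at this)
      have hlast : f (Fin.last 2) = ![1,1] := h2
      rw [hlast]
      refine ⟨Ineff.nashT, Ineff.nashT', fun i => ?_⟩
      rw [Ineff.pay11, Ineff.pay00]; norm_num
    · -- m ≥ 3 : impossible, since ![1,1] is terminal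
      have h1 : f ⟨1, by omega⟩ = ![1,0] :=
        Ineff.imp_from00 _ (by have := hstep ⟨0, by omega⟩; rwa [show f (Fin.castSucc ⟨0, by omega⟩) = ![0,0] from hf0] at this)
      have h2 : f ⟨2, by omega⟩ = ![1,1] :=
        Ineff.imp_from10 _ (by have := hstep ⟨1, by omega⟩; rwa [show f (Fin.castSucc ⟨1, by omega⟩) = ![1,0] from h1] at this)
      exact absurd (by have := hstep ⟨2, by omega⟩; rwa [show f (Fin.castSucc ⟨2, by omega⟩) = ![1,1] from h2] at this)
        (fun h => Ineff.no_imp_from11 _ h)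
end
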